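/- Well-posedness of the mixed-dimensional weak formulation: there exists a unique pair (q, p) ∈ H_0(div,𝔅) × L²(𝔅) satisfying (q, v)_{K^{-1}} − (p, 𝔇·v) = 0 for all v ∈ H_0(div,𝔅) and −(𝔇·q, w) = −(r, w) for all w ∈ L²(𝔅), with stability bound ‖q‖_{H(div,𝔅)} + ‖p‖_{L²(𝔅)} ≤ C ‖r‖_{L²(𝔅)}. -/

import Mathlib

open ContinuousLinearMap

set_option maxHeartbeats 1600000 in
/-- Well-posedness of the mixed-dimensional weak formulation, in the abstract
Babuška–Brezzi setting: with `V = H₀(div,𝔅)` and `Q = L²(𝔅)` Hilbert spaces,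
`a(q,v) = (K⁻¹q, v)` continuous, symmetric and coercive on the kernel of
`b(v,w) = (𝔇·v, w)`, and `b` satisfying the inf-sup condition, for every `r ∈ Q` there is a
unique pair `(q, p)` with `a(q,v) − b(v,p) = 0` for all `v` and `b(q,w) = (r,w)` for all
`w`, together with the stability bound `‖q‖ + ‖p‖ ≤ C ‖r‖`. -/
theorem stmt_11 {V Q : Type*}
    [NormedAddCommGroup V] [InnerProductSpace ℝ V] [CompleteSpace V]
    [NormedAddCommGroup Q] [InnerProductSpace ℝ Q] [CompleteSpace Q]
    (a : V →L[ℝ] V →L[ℝ] ℝ) (b : V →L[ℝ] Q →L[ℝ] ℝ)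
    (hsym : ∀ u v : V, a u v = a v u)
    (α : ℝ) (hα : 0 < α)
    (hcoer : ∀ v : V, (∀ w : Q, b v w = 0) → α * ‖v‖ ^ 2 ≤ a v v)
    (β : ℝ) (hβ : 0 < β)
    (hinfsup : ∀ w : Q, ∃ v : V, ‖v‖ ≤ 1 ∧ β * ‖w‖ ≤ b v w) :
    ∃ C > 0, ∀ r : Q,
      (∃! qp : V × Q,
        (∀ v : V, a qp.1 v - b v qp.2 = 0) ∧ (∀ w : Q, b qp.1 w = (inner ℝ r w : ℝ))) ∧
      (∀ qp : V × Q,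
        ((∀ v : V, a qp.1 v - b v qp.2 = 0) ∧ (∀ w : Q, b qp.1 w = (inner ℝ r w : ℝ))) →
        ‖qp.1‖ + ‖qp.2‖ ≤ C * ‖r‖) := by
  classical
  set M : ℝ := ‖a‖ with hM
  have hM0 : 0 ≤ M := norm_nonneg a
  have habs : ∀ u v : V, |a u v| ≤ M * ‖u‖ * ‖v‖ := by
    intro u v
    calc |a u v| = ‖a u v‖ := rfl
      _ ≤ ‖a u‖ * ‖v‖ := (a u).le_opNorm v
      _ ≤ (M * ‖u‖) * ‖v‖ :=
          mul_le_mul_of_nonneg_right (a.le_opNorm u) (norm_nonneg v)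
      _ = M * ‖u‖ * ‖v‖ := by ring
  -- the operator B : V →L Q with ⟪B v, w⟫ = b v w
  set Bop : V →L[ℝ] Q :=
    ((InnerProductSpace.toDual ℝ Q).symm.toContinuousLinearEquiv :
      (Q →L[ℝ] ℝ) ≃L[ℝ] Q).toContinuousLinearMap.comp b with hBopdef
  have hB : ∀ (v : V) (w : Q), (inner ℝ (Bop v) w : ℝ) = b v w := by
    intro v w
    simp only [hBopdef, ContinuousLinearMap.coe_comp', Function.comp_apply,
      ContinuousLinearEquiv.coe_coe, LinearIsometryEquiv.coe_toContinuousLinearEquiv]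
    exact InnerProductSpace.toDual_symm_apply
  set Bd : Q →L[ℝ] V := ContinuousLinearMap.adjoint Bop with hBddef
  have hBd : ∀ (w : Q) (v : V), (inner ℝ (Bd w) v : ℝ) = b v w := by
    intro w v
    rw [hBddef, ContinuousLinearMap.adjoint_inner_left, real_inner_comm, hB]
  have hBdlow : ∀ w : Q, β * ‖w‖ ≤ ‖Bd w‖ := by
    intro w
    obtain ⟨v, hv1, hv2⟩ := hinfsup w
    calc β * ‖w‖ ≤ b v w := hv2
      _ = (inner ℝ (Bd w) v : ℝ) := (hBd w v).symm
      _ ≤ ‖Bd w‖ * ‖v‖ := real_inner_le_norm _ _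
      _ ≤ ‖Bd w‖ * 1 := mul_le_mul_of_nonneg_left hv1 (norm_nonneg _)
      _ = ‖Bd w‖ := mul_one _
  -- the auxiliary coercive form c on Q
  set c : Q →L[ℝ] Q →L[ℝ] ℝ := (innerSL ℝ).bilinearComp Bd Bd with hcdef
  have hc : ∀ p w : Q, c p w = (inner ℝ (Bd p) (Bd w) : ℝ) := by
    intro p w
    simp [hcdef]
  have ccoer : IsCoercive c := by
    refine ⟨β * β, mul_pos hβ hβ, fun w => ?_⟩
    have h1 := hBdlow w
    have h0 : (0:ℝ) ≤ β * ‖w‖ := by positivity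
    have h2 : (β * ‖w‖) * (β * ‖w‖) ≤ ‖Bd w‖ * ‖Bd w‖ := by nlinarith [norm_nonneg (Bd w)]
    calc β * β * ‖w‖ * ‖w‖ = (β * ‖w‖) * (β * ‖w‖) := by ring
      _ ≤ ‖Bd w‖ * ‖Bd w‖ := h2
      _ = (inner ℝ (Bd w) (Bd w) : ℝ) := (real_inner_self_eq_norm_mul_norm _).symm
      _ = c w w := (hc w w).symm
  set cEq := ccoer.continuousLinearEquivOfBilin with hcEq
  -- the kernel Z of B
  set Z : Submodule ℝ V := LinearMap.ker (Bop : V →ₗ[ℝ] Q) with hZdef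
  haveI : CompleteSpace Z := (ContinuousLinearMap.isClosed_ker Bop).completeSpace_coe
  have hmemker : ∀ v : V, v ∈ Z → ∀ w : Q, b v w = 0 := by
    intro v hv w
    rw [← hB]
    have hv0 : Bop v = 0 := hv
    rw [hv0, inner_zero_left]
  set aZ : Z →L[ℝ] Z →L[ℝ] ℝ := a.bilinearComp Z.subtypeL Z.subtypeL with haZdef
  have haZ : ∀ u v : Z, aZ u v = a (u : V) (v : V) := fun u v => rfl
  have hZnorm : ∀ u : Z, ‖(u : V)‖ = ‖u‖ := fun u => rfl
  have aZcoer : IsCoercive aZ := by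
    refine ⟨α, hα, fun u => ?_⟩
    have h1 : α * ‖(u : V)‖ ^ 2 ≤ a (u : V) (u : V) := hcoer _ (hmemker _ u.2)
    rw [haZ]
    rw [hZnorm] at h1
    nlinarith
  set aZEq := aZcoer.continuousLinearEquivOfBilin with haZEq
  -- the constant
  set Cq : ℝ := (1 + M / α) / β with hCq
  have hCq0 : 0 < Cq := by
    have h : 0 < 1 + M / α := by positivity
    positivity
  set C : ℝ := Cq * (1 + M / β) with hC
  have hC0 : 0 < C := by
    have h : 0 < 1 + M / β := by positivity
    positivity
  refine ⟨C, hC0, fun r => ?_⟩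
  -- construct q₀ with b q₀ w = ⟪r, w⟫ and β‖q₀‖ ≤ ‖r‖
  obtain ⟨q₀, hbq₀, keyq₀⟩ :
      ∃ q₀ : V, (∀ w : Q, b q₀ w = (inner ℝ r w : ℝ)) ∧ β * ‖q₀‖ ≤ ‖r‖ := by
    set p₀ : Q := cEq.symm ((InnerProductSpace.toDual ℝ Q).symm (innerSL ℝ r)) with hp₀def
    have hcp₀ : ∀ w : Q, c p₀ w = (inner ℝ r w : ℝ) := by
      intro w
      have h1 : (inner ℝ (cEq p₀) w : ℝ) = c p₀ w :=
        ccoer.continuousLinearEquivOfBilin_apply p₀ w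
      rw [hp₀def, ContinuousLinearEquiv.apply_symm_apply,
        InnerProductSpace.toDual_symm_apply] at h1
      rw [← h1]
      simp
    refine ⟨Bd p₀, ?_, ?_⟩
    · intro w
      calc b (Bd p₀) w = (inner ℝ (Bd w) (Bd p₀) : ℝ) := (hBd w (Bd p₀)).symm
        _ = (inner ℝ (Bd p₀) (Bd w) : ℝ) := real_inner_comm _ _
        _ = c p₀ w := (hc p₀ w).symm
        _ = (inner ℝ r w : ℝ) := hcp₀ w
    · have h1 : ‖Bd p₀‖ * ‖Bd p₀‖ = (inner ℝ (Bd p₀) (Bd p₀) : ℝ) :=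
        (real_inner_self_eq_norm_mul_norm _).symm
      have h2 : (inner ℝ (Bd p₀) (Bd p₀) : ℝ) = (inner ℝ r p₀ : ℝ) := by
        rw [← hc, hcp₀]
      have h3 : (inner ℝ r p₀ : ℝ) ≤ ‖r‖ * ‖p₀‖ := real_inner_le_norm _ _
      have h4 : β * ‖p₀‖ ≤ ‖Bd p₀‖ := hBdlow p₀
      have h6 : ‖Bd p₀‖ * ‖Bd p₀‖ ≤ ‖r‖ * ‖p₀‖ := by rw [h1, h2]; exact h3
      rcases (norm_nonneg (Bd p₀)).eq_or_lt with h5 | h5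
      · rw [← h5, mul_zero]; exact norm_nonneg r
      · nlinarith [norm_nonneg p₀, norm_nonneg r]
  -- correct by an element of the kernel
  obtain ⟨z, hz⟩ : ∃ z : Z, ∀ v : Z, aZ z v = -(a q₀ (v : V)) := by
    set ℓz : Z →L[ℝ] ℝ := -((a q₀).comp Z.subtypeL) with hℓzdef
    refine ⟨aZEq.symm ((InnerProductSpace.toDual ℝ Z).symm ℓz), fun v => ?_⟩
    set z := aZEq.symm ((InnerProductSpace.toDual ℝ Z).symm ℓz) with hzdef
    have h1 : (inner ℝ (aZEq z) v : ℝ) = aZ z v :=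
      aZcoer.continuousLinearEquivOfBilin_apply z v
    rw [hzdef, ContinuousLinearEquiv.apply_symm_apply,
      InnerProductSpace.toDual_symm_apply] at h1
    rw [← h1, hℓzdef]
    rfl
  have keyz : α * ‖z‖ ≤ M * ‖q₀‖ := by
    have h1 : α * ‖(z : V)‖ ^ 2 ≤ a (z : V) (z : V) := hcoer _ (hmemker _ z.2)
    rw [hZnorm] at h1
    have h2 : a (z : V) (z : V) = -(a q₀ (z : V)) := by rw [← haZ, hz]
    have h3 := habs q₀ (z : V)
    rw [hZnorm] at h3
    have h4 := abs_le.mp h3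
    rcases (norm_nonneg z).eq_or_lt with h5 | h5
    · rw [← h5, mul_zero]; positivity
    · nlinarith [norm_nonneg q₀]
  set q : V := (z : V) + q₀ with hqdef
  have hqnorm : ‖q‖ ≤ Cq * ‖r‖ := by
    have h1 : ‖q‖ ≤ ‖z‖ + ‖q₀‖ := by
      rw [← hZnorm]; exact norm_add_le _ _
    have hrw : Cq * ‖r‖ = ((α + M) * ‖r‖) / (α * β) := by
      rw [hCq]; field_simp
    rw [hrw, le_div_iff₀ (mul_pos hα hβ)]
    have e1 := mul_le_mul_of_nonneg_left keyz hβ.le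
    have e2 := mul_le_mul_of_nonneg_left keyq₀ hM0
    have e3 := mul_le_mul_of_nonneg_left keyq₀ hα.le
    have e4 := mul_le_mul_of_nonneg_left h1 (mul_pos hα hβ).le
    linarith [e1, e2, e3, e4]
  have hqker : ∀ v : V, v ∈ Z → a q v = 0 := by
    intro v hv
    have h1 : a q v = a (z : V) v + a q₀ v := by
      rw [hqdef, map_add]; rfl
    have h2 : a (z : V) v = -(a q₀ v) := by
      have := hz ⟨v, hv⟩
      rw [haZ] at this
      exact this
    rw [h1, h2]; ring
  have hq2 : ∀ w : Q, b q w = (inner ℝ r w : ℝ) := by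
    intro w
    have h1 : b q w = b (z : V) w + b q₀ w := by
      rw [hqdef, map_add]; rfl
    rw [h1, hmemker _ z.2, hbq₀, zero_add]
  -- construct p
  obtain ⟨u, hu⟩ : ∃ u : V, ∀ v : V, (inner ℝ u v : ℝ) = a q v :=
    ⟨(InnerProductSpace.toDual ℝ V).symm (a q),
      fun v => InnerProductSpace.toDual_symm_apply⟩
  obtain ⟨p, hcp⟩ : ∃ p : Q, ∀ w : Q, c p w = (inner ℝ u (Bd w) : ℝ) := by
    set p : Q := cEq.symm ((InnerProductSpace.toDual ℝ Q).symm ((innerSL ℝ u).comp Bd))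
      with hpdef
    refine ⟨p, fun w => ?_⟩
    have h1 : (inner ℝ (cEq p) w : ℝ) = c p w :=
      ccoer.continuousLinearEquivOfBilin_apply p w
    rw [hpdef, ContinuousLinearEquiv.apply_symm_apply,
      InnerProductSpace.toDual_symm_apply] at h1
    rw [← h1]
    simp
  set d : V := Bd p - u with hddef
  have hdker : Bop d = 0 := by
    have h1 : (inner ℝ d (Bd (Bop d)) : ℝ) = 0 := by
      rw [hddef, inner_sub_left, ← hc, hcp, sub_self]
    have h2 : (inner ℝ (Bop d) (Bop d) : ℝ) = 0 := by
      rw [← h1, hBddef, ContinuousLinearMap.adjoint_inner_right]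
    exact inner_self_eq_zero.mp h2
  have hdzero : d = 0 := by
    have h1 : (inner ℝ (Bd p) d : ℝ) = 0 := by
      rw [hBddef, ContinuousLinearMap.adjoint_inner_left, hdker, inner_zero_right]
    have h2 : (inner ℝ u d : ℝ) = 0 := by
      rw [hu]; exact hqker d hdker
    have h3 : (inner ℝ d d : ℝ) = 0 := by
      rw [hddef, inner_sub_left, h1, h2, sub_self]
    exact inner_self_eq_zero.mp h3
  have hBdp : Bd p = u := by
    have := sub_eq_zero.mp hdzero
    exact this
  have heq1 : ∀ v : V, a q v - b v p = 0 := by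
    intro v
    have h1 : b v p = (inner ℝ (Bd p) v : ℝ) := (hBd p v).symm
    rw [h1, hBdp, hu]; ring
  have keyp : β * ‖p‖ ≤ M * ‖q‖ := by
    obtain ⟨v, hv1, hv2⟩ := hinfsup p
    have h1 : b v p = a q v := by
      have := heq1 v; linarith
    have h2 : a q v ≤ M * ‖q‖ * ‖v‖ := le_of_abs_le (habs q v)
    have h3 : M * ‖q‖ * ‖v‖ ≤ M * ‖q‖ * 1 := by
      have hq0 : (0:ℝ) ≤ M * ‖q‖ := by positivity
      exact mul_le_mul_of_nonneg_left hv1 hq0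
    calc β * ‖p‖ ≤ b v p := hv2
      _ = a q v := h1
      _ ≤ M * ‖q‖ * ‖v‖ := h2
      _ ≤ M * ‖q‖ * 1 := h3
      _ = M * ‖q‖ := mul_one _
  -- the constructed pair solves the system; bound
  have hsol : (∀ v : V, a q v - b v p = 0) ∧ (∀ w : Q, b q w = (inner ℝ r w : ℝ)) :=
    ⟨heq1, hq2⟩
  have hbound : ‖q‖ + ‖p‖ ≤ C * ‖r‖ := by
    have h1 : ‖p‖ * β ≤ M * (Cq * ‖r‖) := by
      have h2 := mul_le_mul_of_nonneg_left hqnorm hM0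
      linarith [keyp, h2]
    have h3 : ‖p‖ ≤ M * (Cq * ‖r‖) / β := (le_div_iff₀ hβ).mpr h1
    have hCr : C * ‖r‖ = Cq * ‖r‖ + M * (Cq * ‖r‖) / β := by
      rw [hC]; field_simp
    rw [hCr]
    linarith [hqnorm]
  -- uniqueness
  have huniq : ∀ qp : V × Q,
      ((∀ v : V, a qp.1 v - b v qp.2 = 0) ∧ (∀ w : Q, b qp.1 w = (inner ℝ r w : ℝ))) →
      qp = (q, p) := by
    rintro ⟨q', p'⟩ ⟨h1', h2'⟩
    have hbdq : ∀ w : Q, b (q' - q) w = 0 := by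
      intro w
      rw [map_sub]
      have : (b q' - b q) w = b q' w - b q w := rfl
      rw [this, h2' w, hq2 w, sub_self]
    have hadq : ∀ v : V, a (q' - q) v = b v (p' - p) := by
      intro v
      have e1 := h1' v
      have e2 := heq1 v
      have e3 : a (q' - q) v = a q' v - a q v := by rw [map_sub]; rfl
      have e4 : b v (p' - p) = b v p' - b v p := map_sub _ _ _
      rw [e3, e4]; linarith
    have hdq0 : q' - q = 0 := by
      have h1 : α * ‖q' - q‖ ^ 2 ≤ a (q' - q) (q' - q) := hcoer _ hbdq
      have h2 : a (q' - q) (q' - q) = b (q' - q) (p' - p) := hadq _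
      have h3 : b (q' - q) (p' - p) = 0 := hbdq _
      have h4 : ‖q' - q‖ ^ 2 ≤ 0 := by
        have h4' : α * ‖q' - q‖ ^ 2 ≤ α * 0 := by rw [mul_zero]; linarith
        exact (mul_le_mul_iff_right₀ hα).mp h4'
      have h5 : ‖q' - q‖ = 0 := by
        have h6 : ‖q' - q‖ ^ 2 = 0 := le_antisymm h4 (sq_nonneg _)
        exact pow_eq_zero_iff (two_ne_zero) |>.mp h6
      exact norm_eq_zero.mp h5
    have hq' : q' = q := sub_eq_zero.mp hdq0
    have hbp : ∀ v : V, b v (p' - p) = 0 := by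
      intro v
      rw [← hadq, hdq0]
      simp
    have hdp0 : p' = p := by
      obtain ⟨v, hv1, hv2⟩ := hinfsup (p' - p)
      rw [hbp v] at hv2
      have h1 : ‖p' - p‖ ≤ 0 := by
        have h1' : β * ‖p' - p‖ ≤ β * 0 := by rw [mul_zero]; linarith
        exact (mul_le_mul_iff_right₀ hβ).mp h1'
      have h2 : ‖p' - p‖ = 0 := le_antisymm h1 (norm_nonneg _)
      exact sub_eq_zero.mp (norm_eq_zero.mp h2)
    simp [hq', hdp0]
  refine ⟨⟨(q, p), hsol, huniq⟩, ?_⟩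
  intro qp h
  rw [huniq qp h]
  exact hbound
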